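/- Let κ, c ∈ ℝ and let b : (0,∞) → ℂ be continuous such that for every N ∈ ℕ there is C_N with |b(t)| ≤ C_N·t^N for all t ∈ (0,1]. Define a(t) = i·t^{κ}·e^{ic/t}·∫₀ᵗ e^{−ic/s}·b(s)·s^{−κ−2} ds for t > 0. Then: (i) the integral converges absolutely for every t > 0; (ii) a is differentiable on (0,∞) and satisfies −i·t²·a'(t) + i·κ·t·a(t) + c·a(t) = b(t) for all t > 0; (iii) for every N ∈ ℕ there is C'_N with |a(t)| ≤ C'_N·t^N for all t ∈ (0,1]. -/

import Mathlib

open Complex MeasureTheory Set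

theorem aux_cont (κ c : ℝ) (b : ℝ → ℂ) (hbc : ContinuousOn b (Ioi 0)) :
    ContinuousOn (fun s : ℝ => Complex.exp (-Complex.I * c / s) * b s * ((s ^ (-κ - 2) : ℝ) : ℂ)) (Ioi 0) := by
  apply ContinuousOn.mul
  apply ContinuousOn.mul
  · exact (Complex.continuous_exp.comp_continuousOn ((continuousOn_const).div
      (Complex.continuous_ofReal.continuousOn) (fun s hs => by
        simpa using ne_of_gt (mem_Ioi.mp hs))))
  · exact hbc
  · exact Complex.continuous_ofReal.comp_continuousOn
      (ContinuousOn.rpow_const continuousOn_id (fun s hs => Or.inl (ne_of_gt (mem_Ioi.mp hs))))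

theorem aux_norm (κ c s : ℝ) (b : ℝ → ℂ) (hs : 0 < s) :
    ‖Complex.exp (-Complex.I * c / s) * b s * ((s ^ (-κ - 2) : ℝ) : ℂ)‖
      = ‖b s‖ * s ^ (-κ - 2) := by
  rw [norm_mul, norm_mul]
  have h1 : ‖Complex.exp (-Complex.I * c / s)‖ = 1 := by
    have : -Complex.I * c / s = ((-(c/s) : ℝ) : ℂ) * Complex.I := by push_cast; ring
    rw [this, Complex.norm_exp_ofReal_mul_I]
  rw [h1, one_mul, Complex.norm_real, Real.norm_eq_abs,
    _root_.abs_of_nonneg (Real.rpow_nonneg hs.le _)]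

theorem aux_normcoef (κ c t : ℝ) (z : ℂ) (ht : 0 < t) :
    ‖Complex.I * ((t ^ κ : ℝ) : ℂ) * Complex.exp (Complex.I * c / t) * z‖ = t ^ κ * ‖z‖ := by
  rw [norm_mul, norm_mul, norm_mul, Complex.norm_I, one_mul]
  have h1 : ‖Complex.exp (Complex.I * c / t)‖ = 1 := by
    have : Complex.I * c / t = (((c/t) : ℝ) : ℂ) * Complex.I := by push_cast; ring
    rw [this, Complex.norm_exp_ofReal_mul_I]
  rw [h1, mul_one, Complex.norm_real, Real.norm_eq_abs,
    _root_.abs_of_nonneg (Real.rpow_nonneg ht.le _)]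

theorem aux_int (κ c : ℝ) (b : ℝ → ℂ) (hbc : ContinuousOn b (Ioi 0))
    (hb : ∀ N : ℕ, ∃ C : ℝ, ∀ t ∈ Ioc (0 : ℝ) 1, ‖b t‖ ≤ C * t ^ N)
    {t : ℝ} (ht : 0 < t) :
    IntegrableOn (fun s : ℝ => Complex.exp (-Complex.I * c / s) * b s * ((s ^ (-κ - 2) : ℝ) : ℂ))
      (Ioc 0 t) := by
  set f := fun s : ℝ => Complex.exp (-Complex.I * c / s) * b s * ((s ^ (-κ - 2) : ℝ) : ℂ) with hf
  set u := min t 1 with hu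
  have hu0 : 0 < u := lt_min ht one_pos
  have hut : u ≤ t := min_le_left _ _
  have hsplit : Ioc (0:ℝ) t = Ioc 0 u ∪ Ioc u t := (Ioc_union_Ioc_eq_Ioc hu0.le hut).symm
  rw [hsplit]
  apply IntegrableOn.union
  · obtain ⟨C, hC⟩ := hb (⌈|κ|⌉₊ + 2)
    set M := ⌈|κ|⌉₊ + 2 with hM
    have hκM : κ + 2 ≤ (M : ℝ) := by
      have := Nat.le_ceil |κ|
      have h2 : κ ≤ |κ| := le_abs_self κ
      push_cast [hM]
      linarith
    apply Integrable.mono' (g := fun _ => C) (integrable_const C)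
    · exact ((aux_cont κ c b hbc).mono (fun s hs => hs.1)).aestronglyMeasurable measurableSet_Ioc
    · filter_upwards [ae_restrict_mem measurableSet_Ioc] with s hs
      have hs0 : 0 < s := hs.1
      have hs1 : s ≤ 1 := hs.2.trans (min_le_right t 1)
      rw [aux_norm κ c s b hs0]
      calc ‖b s‖ * s ^ (-κ - 2) ≤ (C * s ^ M) * s ^ (-κ - 2) := by
            apply mul_le_mul_of_nonneg_right (hC s ⟨hs0, hs1⟩) (Real.rpow_nonneg hs0.le _)
        _ = C * s ^ ((M : ℝ) + (-κ - 2)) := by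
            rw [mul_assoc, ← Real.rpow_natCast s M, ← Real.rpow_add hs0]
        _ ≤ C * 1 := by
            have hC0 : 0 ≤ C := by
              have := hC 1 ⟨one_pos, le_refl 1⟩; simpa using (norm_nonneg _).trans this
            apply mul_le_mul_of_nonneg_left _ hC0
            apply Real.rpow_le_one hs0.le hs1
            linarith
        _ = C := mul_one C
  · exact (((aux_cont κ c b hbc).mono (fun s hs => lt_of_lt_of_le hu0 hs.1)).integrableOn_Icc).mono_set
      Ioc_subset_Icc_self

theorem aux_rpow_int (α t : ℝ) (hα : -1 < α) :
    IntegrableOn (fun s : ℝ => s ^ α) (Ioc (0:ℝ) t) := by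
  have := (intervalIntegral.intervalIntegrable_rpow' (a := 0) (b := t) hα)
  rw [intervalIntegrable_iff] at this
  exact this.mono_set (by rcases le_total (0:ℝ) t with h|h
                          · rw [uIoc_of_le h]
                          · simp [Ioc_eq_empty_of_le, h])

theorem aux_decay (κ c : ℝ) (b : ℝ → ℂ) (hbc : ContinuousOn b (Ioi 0))
    (hb : ∀ N : ℕ, ∃ C : ℝ, ∀ t ∈ Ioc (0 : ℝ) 1, ‖b t‖ ≤ C * t ^ N)
    (hint : ∀ t > (0:ℝ), IntegrableOn
      (fun s : ℝ => Complex.exp (-Complex.I * c / s) * b s * ((s ^ (-κ - 2) : ℝ) : ℂ)) (Ioc 0 t))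
    (N : ℕ) :
    ∃ C' : ℝ, ∀ t ∈ Ioc (0 : ℝ) 1,
      ‖Complex.I * ((t ^ κ : ℝ) : ℂ) * Complex.exp (Complex.I * c / t) *
        ∫ s in Ioc (0 : ℝ) t, Complex.exp (-Complex.I * c / s) * b s * ((s ^ (-κ - 2) : ℝ) : ℂ)‖
        ≤ C' * t ^ N := by
  set f := fun s : ℝ => Complex.exp (-Complex.I * c / s) * b s * ((s ^ (-κ - 2) : ℝ) : ℂ) with hf
  obtain ⟨C, hC⟩ := hb (N + ⌈|κ|⌉₊ + 2)
  set M : ℕ := N + ⌈|κ|⌉₊ + 2 with hM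
  have hC0 : 0 ≤ C := by
    have := hC 1 ⟨one_pos, le_refl 1⟩; simpa using (norm_nonneg _).trans this
  set α : ℝ := (M : ℝ) - κ - 2 with hα
  have hα0 : 0 ≤ α := by
    have h1 : κ ≤ |κ| := le_abs_self κ
    have h2 := Nat.le_ceil |κ|
    rw [hα]; push_cast [hM]; linarith
  have hαm1 : -1 < α := by linarith
  refine ⟨C / (α + 1), fun t ht => ?_⟩
  obtain ⟨ht0, ht1⟩ := ht
  rw [aux_normcoef κ c t _ ht0]
  have hFbound : ‖∫ s in Ioc (0:ℝ) t, f s‖ ≤ C * (t ^ (α + 1) / (α + 1)) := by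
    calc ‖∫ s in Ioc (0:ℝ) t, f s‖ ≤ ∫ s in Ioc (0:ℝ) t, ‖f s‖ :=
          norm_integral_le_integral_norm _
      _ ≤ ∫ s in Ioc (0:ℝ) t, C * s ^ α := by
          apply setIntegral_mono_on ((hint t ht0).norm)
            (((aux_rpow_int α t hαm1)).const_mul C) measurableSet_Ioc
          intro s hs
          rw [aux_norm κ c s b hs.1]
          calc ‖b s‖ * s ^ (-κ - 2) ≤ (C * s ^ M) * s ^ (-κ - 2) :=
                mul_le_mul_of_nonneg_right (hC s ⟨hs.1, hs.2.trans ht1⟩)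
                  (Real.rpow_nonneg hs.1.le _)
            _ = C * s ^ α := by
                rw [mul_assoc, ← Real.rpow_natCast s M, ← Real.rpow_add hs.1, hα]
                ring_nf
      _ = C * (t ^ (α + 1) / (α + 1)) := by
          rw [integral_const_mul, ← intervalIntegral.integral_of_le ht0.le,
            integral_rpow (Or.inl hαm1), Real.zero_rpow (by linarith), sub_zero]
  calc t ^ κ * ‖∫ s in Ioc (0:ℝ) t, f s‖ ≤ t ^ κ * (C * (t ^ (α + 1) / (α + 1))) :=
        mul_le_mul_of_nonneg_left hFbound (Real.rpow_nonneg ht0.le _)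
    _ = (C / (α + 1)) * t ^ (κ + (α + 1)) := by
        rw [Real.rpow_add ht0 κ (α+1)]; ring
    _ ≤ (C / (α + 1)) * t ^ (N : ℝ) := by
        apply mul_le_mul_of_nonneg_left _ (div_nonneg hC0 (by linarith))
        apply Real.rpow_le_rpow_of_exponent_ge ht0 ht1
        have : κ + (α + 1) = (M : ℝ) - 1 := by rw [hα]; ring
        rw [this]; push_cast [hM]; linarith
    _ = (C / (α + 1)) * t ^ N := by rw [Real.rpow_natCast]

theorem aux_F (f : ℝ → ℂ) (hc : ContinuousOn f (Ioi 0))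
    (hint : ∀ t > (0:ℝ), IntegrableOn f (Ioc 0 t)) (t : ℝ) (ht : 0 < t) :
    HasDerivAt (fun u => ∫ s in Ioc (0:ℝ) u, f s) (f t) t := by
  set r := t / 2 with hr
  have hr0 : 0 < r := by positivity
  have hrt : r < t := by rw [hr]; linarith
  have hII : IntervalIntegrable f volume r t := by
    rw [intervalIntegrable_iff, uIoc_of_le hrt.le]
    exact (hint t ht).mono_set (Ioc_subset_Ioc_left hr0.le)
  have hG : HasDerivAt (fun u => (∫ s in Ioc (0:ℝ) r, f s) + ∫ x in r..u, f x) (f t) t := by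
    apply HasDerivAt.const_add
    exact intervalIntegral.integral_hasDerivAt_right hII
      (hc.stronglyMeasurableAtFilter isOpen_Ioi t ht)
      (hc.continuousAt (isOpen_Ioi.mem_nhds ht))
  apply hG.congr_of_eventuallyEq
  filter_upwards [Ioi_mem_nhds hrt] with u hu
  have hu0 : 0 < u := hr0.trans hu
  rw [intervalIntegral.integral_of_le hu.le,
    ← setIntegral_union (Ioc_disjoint_Ioc_of_le le_rfl) measurableSet_Ioc
      ((hint u hu0).mono_set (Ioc_subset_Ioc_right hu.le))
      ((hint u hu0).mono_set (Ioc_subset_Ioc_left hr0.le)),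
    Ioc_union_Ioc_eq_Ioc hr0.le hu.le]

theorem aux_alg (t κ c : ℝ) (P P' E E2 T Fv bt : ℂ) (hT : (↑t:ℂ) ≠ 0)
    (hEE : E * E2 = 1) (hP3 : ↑t * P' = ↑κ * P) (hP4 : P * T * ↑t^2 = 1) :
    -I*(↑t:ℂ)^2*((I*P'*E + (I*P)*(E*(I*↑c*(-1/(↑t:ℂ)^2))))*Fv + ((I*P)*E)*(E2*bt*T))
      + I*↑κ*↑t*(I*P*E*Fv) + ↑c*(I*P*E*Fv) = bt := by
  have h : -I*(↑t:ℂ)^2*((I*P'*E + (I*P)*(E*(I*↑c*(-1/(↑t:ℂ)^2))))*Fv + ((I*P)*E)*(E2*bt*T))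
      = (↑t:ℂ)^2*P'*E*Fv - I*↑c*P*E*Fv + (↑t:ℂ)^2*P*E*E2*bt*T := by
    have ht2 : (↑t:ℂ)^2 * (1/(↑t:ℂ)^2) = 1 := by field_simp
    linear_combination (-(↑t:ℂ)^2*P'*E*Fv - (↑t:ℂ)^2*P*E*E2*bt*T + I*P*E*↑c*Fv*(↑t:ℂ)^2*(1/(↑t:ℂ)^2))*Complex.I_sq + (-I*P*E*↑c*Fv)*ht2
  rw [h]
  linear_combination (↑t*E*Fv)*hP3 + bt*(E*E2)*hP4 + bt*hEE + (↑t*E*Fv*↑κ*P)*Complex.I_sq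

theorem aux_ode (κ c : ℝ) (b : ℝ → ℂ)
    (hcf : ContinuousOn (fun s : ℝ => Complex.exp (-Complex.I * c / s) * b s * ((s ^ (-κ - 2) : ℝ) : ℂ)) (Ioi 0))
    (hint : ∀ t > (0:ℝ), IntegrableOn
      (fun s : ℝ => Complex.exp (-Complex.I * c / s) * b s * ((s ^ (-κ - 2) : ℝ) : ℂ)) (Ioc 0 t))
    (t : ℝ) (ht : 0 < t) :
    HasDerivAt (fun u : ℝ => Complex.I * ((u ^ κ : ℝ) : ℂ) * Complex.exp (Complex.I * c / u) *
        ∫ s in Ioc (0 : ℝ) u, Complex.exp (-Complex.I * c / s) * b s * ((s ^ (-κ - 2) : ℝ) : ℂ))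
      ((Complex.I * ((κ * t ^ (κ-1) : ℝ) : ℂ) * Complex.exp (Complex.I * c / t)
          + (Complex.I * ((t ^ κ : ℝ) : ℂ)) * (Complex.exp (Complex.I * c / t) * (Complex.I * c * (-1 / (t:ℂ)^2))))
          * (∫ s in Ioc (0 : ℝ) t, Complex.exp (-Complex.I * c / s) * b s * ((s ^ (-κ - 2) : ℝ) : ℂ))
        + (Complex.I * ((t ^ κ : ℝ) : ℂ) * Complex.exp (Complex.I * c / t))
          * (Complex.exp (-Complex.I * c / t) * b t * ((t ^ (-κ - 2) : ℝ) : ℂ))) t := by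
  have hF := aux_F _ hcf hint t ht
  have hP : HasDerivAt (fun u : ℝ => ((u ^ κ : ℝ) : ℂ)) ((κ * t ^ (κ-1) : ℝ) : ℂ) t :=
    (Real.hasDerivAt_rpow_const (Or.inl ht.ne')).ofReal_comp
  have hcoe : HasDerivAt (fun u : ℝ => (u : ℂ)) 1 t := by
    simpa using (hasDerivAt_id t).ofReal_comp
  have hT : (t : ℂ) ≠ 0 := by exact_mod_cast ht.ne'
  have hE : HasDerivAt (fun u : ℝ => Complex.exp (Complex.I * c / u))
      (Complex.exp (Complex.I * c / t) * (Complex.I * c * (-1 / (t:ℂ)^2))) t := by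
    have h := ((hasDerivAt_const t (Complex.I * (c:ℂ))).div hcoe hT).cexp
    have hval : Complex.exp (Complex.I * c / t) * ((0 * (t:ℂ) - Complex.I * ↑c * 1) / (t:ℂ) ^ 2)
        = Complex.exp (Complex.I * c / t) * (Complex.I * c * (-1 / (t:ℂ)^2)) := by ring
    simp only [Pi.div_apply] at h
    rwa [hval] at h
  exact ((hP.const_mul Complex.I).mul hE).mul hF

/-- The model transport equation near spatial infinity: with `b` continuous on `(0,∞)`
and vanishing to infinite order at `t = 0`, the function
`a(t) = i·t^κ·e^{ic/t}·∫₀ᵗ e^{−ic/s}·b(s)·s^{−κ−2} ds` is well defined (the integral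
converges absolutely), differentiable, solves `(t²D_t + iκt + c)a = b`, i.e.
`−i·t²·a'(t) + i·κ·t·a(t) + c·a(t) = b(t)`, and vanishes to infinite order at `t = 0`. -/
theorem stmt11 (κ c : ℝ) (b : ℝ → ℂ)
    (hbc : ContinuousOn b (Ioi 0))
    (hb : ∀ N : ℕ, ∃ C : ℝ, ∀ t ∈ Ioc (0 : ℝ) 1, ‖b t‖ ≤ C * t ^ N)
    (a : ℝ → ℂ)
    (ha : a = fun t : ℝ => Complex.I * ((t ^ κ : ℝ) : ℂ) * Complex.exp (Complex.I * c / t) *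
      ∫ s in Ioc (0 : ℝ) t, Complex.exp (-Complex.I * c / s) * b s * ((s ^ (-κ - 2) : ℝ) : ℂ)) :
    (∀ t > (0 : ℝ), IntegrableOn
        (fun s : ℝ => Complex.exp (-Complex.I * c / s) * b s * ((s ^ (-κ - 2) : ℝ) : ℂ))
        (Ioc 0 t)) ∧
    (∀ t > (0 : ℝ), DifferentiableAt ℝ a t ∧
        -Complex.I * (t : ℂ) ^ 2 * deriv a t + Complex.I * κ * t * a t + c * a t = b t) ∧
    (∀ N : ℕ, ∃ C' : ℝ, ∀ t ∈ Ioc (0 : ℝ) 1, ‖a t‖ ≤ C' * t ^ N) := by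
  subst ha
  have hcf := aux_cont κ c b hbc
  have hint : ∀ t > (0:ℝ), IntegrableOn
      (fun s : ℝ => Complex.exp (-Complex.I * c / s) * b s * ((s ^ (-κ - 2) : ℝ) : ℂ)) (Ioc 0 t) :=
    fun t ht => aux_int κ c b hbc hb ht
  refine ⟨hint, fun t ht => ?_, fun N => aux_decay κ c b hbc hb hint N⟩
  have hD := aux_ode κ c b hcf hint t ht
  refine ⟨hD.differentiableAt, ?_⟩
  rw [hD.deriv]
  have hT : (t : ℂ) ≠ 0 := by exact_mod_cast ht.ne'
  have hEE : Complex.exp (Complex.I * c / t) * Complex.exp (-Complex.I * c / t) = 1 := by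
    rw [← Complex.exp_add]
    have : Complex.I * c / t + -Complex.I * c / t = 0 := by ring
    rw [this, Complex.exp_zero]
  have hP3 : (t:ℂ) * ((κ * t ^ (κ-1) : ℝ) : ℂ) = (κ:ℂ) * ((t ^ κ : ℝ) : ℂ) := by
    have h1 : t ^ (κ - 1) * t = t ^ κ := by
      rw [← Real.rpow_add_one ht.ne' (κ-1)]; norm_num
    have hr : t * (κ * t ^ (κ-1)) = κ * t ^ κ := by rw [← h1]; ring
    rw [← Complex.ofReal_mul, ← Complex.ofReal_mul]
    exact_mod_cast hr
  have hP4 : ((t ^ κ : ℝ) : ℂ) * ((t ^ (-κ - 2) : ℝ) : ℂ) * (t:ℂ)^2 = 1 := by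
    have hr2 : t ^ κ * t ^ (-κ - 2) * t ^ 2 = 1 := by
      rw [← Real.rpow_natCast t 2, ← Real.rpow_add ht, ← Real.rpow_add ht]
      norm_num
      rw [show κ + (-κ - 2) + 2 = 0 by ring, Real.rpow_zero]
    rw [← Complex.ofReal_pow, ← Complex.ofReal_mul, ← Complex.ofReal_mul]
    exact_mod_cast hr2
  exact aux_alg t κ c _ _ _ _ _ _ _ hT hEE hP3 hP4
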